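/- Every uncountable abelian group has a countable quotient which is not finitely generated. -/

import Mathlib

lemma countable_coe_closure {A : Type*} [Group A] {s : Set A} (hs : s.Countable) :
    ((Subgroup.closure s : Subgroup A) : Set A).Countable := by
  have hs' : (s ∪ s⁻¹).Countable := hs.union (by simpa [Set.image_inv] using hs.image (·⁻¹))
  haveI := hs'.to_subtype
  apply Set.Countable.mono ?_ (Set.countable_range
    (fun l : List ↥(s ∪ s⁻¹) => (l.map Subtype.val).prod))
  intro x hx
  have hx' : x ∈ Submonoid.closure (s ∪ s⁻¹) := by
    rw [← Subgroup.closure_toSubmonoid]; exact hx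
  obtain ⟨l, hl, rfl⟩ := Submonoid.exists_list_of_mem_closure hx'
  refine ⟨l.attach.map (fun y => ⟨y.1, hl y.1 y.2⟩), ?_⟩
  simp [List.map_map]


section Essential
variable {Q : Type*} [CommGroup Q] {S : Subgroup Q}
  (hess : ∀ q : Q, q ≠ 1 → ∃ k : ℤ, q ^ k ≠ 1 ∧ q ^ k ∈ S)

include hess in
lemma prime_torsion_mem {p : ℕ} (hp : p.Prime) {q : Q} (hq : q ^ p = 1) : q ∈ S := by
  rcases eq_or_ne q 1 with rfl | hq1
  · exact one_mem S
  obtain ⟨k, hk1, hk2⟩ := hess q hq1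
  have hqp : q ^ (p : ℤ) = 1 := by rw [zpow_natCast, hq]
  have hpk : ¬ ((p : ℤ) ∣ k) := by
    rintro ⟨c, rfl⟩
    rw [zpow_mul, hqp, one_zpow] at hk1
    exact hk1 rfl
  have hco : IsCoprime (p : ℤ) k :=
    ((Nat.prime_iff_prime_int.mp hp).coprime_iff_not_dvd).mpr hpk
  obtain ⟨a, b, hab⟩ := hco
  have : q = (q ^ (p:ℤ)) ^ a * (q ^ k) ^ b := by
    rw [← zpow_mul, ← zpow_mul, ← zpow_add, mul_comm (p:ℤ) a, mul_comm k b, hab, zpow_one]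
  rw [this, hqp, one_zpow, one_mul]
  exact Subgroup.zpow_mem S hk2 b

include hess in
lemma torsion_countable (hS : (S : Set Q).Countable) :
    ∀ n : ℕ, 0 < n → {q : Q | q ^ n = 1}.Countable := by
  intro n
  induction n using Nat.strong_induction_on with
  | _ n ih =>
    intro hn
    rcases eq_or_ne n 1 with rfl | h1
    · have : {q : Q | q ^ 1 = 1} = {1} := by ext q; simp
      rw [this]; exact Set.countable_singleton 1
    set p := n.minFac with hpdef
    have hp : p.Prime := Nat.minFac_prime h1
    set m := n / p with hmdef
    have hmn : m * p = n := Nat.div_mul_cancel (Nat.minFac_dvd n)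
    have hm0 : 0 < m := Nat.div_pos (Nat.minFac_le hn) (Nat.minFac_pos n)
    have hmlt : m < n := Nat.div_lt_self hn hp.one_lt
    have hsub : {q : Q | q ^ n = 1} ⊆
        ⋃ r ∈ {r : Q | r ^ m = 1}, {q : Q | q ^ n = 1 ∧ q ^ p = r} := by
      intro q hq
      have : (q ^ p) ^ m = 1 := by
        rw [← pow_mul, mul_comm, hmn]; exact hq
      exact Set.mem_biUnion this ⟨hq, rfl⟩
    refine Set.Countable.mono hsub ((ih m hmlt hm0).biUnion ?_)
    intro r _
    rcases Set.eq_empty_or_nonempty {q : Q | q ^ n = 1 ∧ q ^ p = r} with he | ⟨q₀, hq₀⟩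
    · rw [he]; exact Set.countable_empty
    refine Set.Countable.mono ?_ (hS.image (fun t => q₀ * t))
    rintro q ⟨hqn, hqp⟩
    have ht : (q₀⁻¹ * q) ^ p = 1 := by
      rw [mul_pow, inv_pow, hqp, hq₀.2, inv_mul_cancel]
    exact ⟨q₀⁻¹ * q, prime_torsion_mem hess hp ht, by group⟩

include hess in
lemma countable_of_essential (hS : (S : Set Q).Countable) : Countable Q := by
  rw [← Set.countable_univ_iff]
  have hsub : (Set.univ : Set Q) ⊆
      {1} ∪ ⋃ k ∈ {k : ℤ | k ≠ 0}, ⋃ g ∈ (S : Set Q), {q : Q | q ^ k = g} := by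
    intro q _
    rcases eq_or_ne q 1 with rfl | hq1
    · exact Or.inl rfl
    obtain ⟨k, hk1, hk2⟩ := hess q hq1
    have hk0 : k ≠ 0 := by rintro rfl; simp at hk1
    exact Or.inr (Set.mem_biUnion hk0 (Set.mem_biUnion hk2 rfl))
  refine Set.Countable.mono hsub ((Set.countable_singleton 1).union ?_)
  refine (Set.to_countable _).biUnion fun k hk => hS.biUnion fun g _ => ?_
  rcases Set.eq_empty_or_nonempty {q : Q | q ^ k = g} with he | ⟨q₀, hq₀⟩
  · rw [he]; exact Set.countable_empty
  have hT := torsion_countable hess hS k.natAbs (Int.natAbs_pos.mpr hk)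
  refine Set.Countable.mono ?_ (hT.image (fun t => q₀ * t))
  intro q hq
  have hqk : (q₀⁻¹ * q) ^ k = 1 := by
    rw [mul_zpow, inv_zpow, hq, hq₀, inv_mul_cancel]
  have : (q₀⁻¹ * q) ^ k.natAbs = 1 := by
    rcases Int.natAbs_eq k with h | h
    · rw [← zpow_natCast, ← h, hqk]
    · rw [← zpow_natCast, ← neg_neg (k.natAbs : ℤ), ← h, zpow_neg, hqk, inv_one]
  exact ⟨q₀⁻¹ * q, this, by group⟩

end Essential


open Classical in
noncomputable def pickOut {A : Type*} [Group A] (S : Subgroup A) : A :=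
  if h : ∃ x, x ∉ S then h.choose else 1

lemma pickOut_not_mem {A : Type*} [Group A] {S : Subgroup A} (h : ∃ x, x ∉ S) :
    pickOut S ∉ S := by
  rw [pickOut, dif_pos h]; exact h.choose_spec

noncomputable def chainSet (A : Type*) [Group A] : ℕ → Set A
  | 0 => ∅
  | n + 1 => insert (pickOut (Subgroup.closure (chainSet A n))) (chainSet A n)

noncomputable def chainF (A : Type*) [Group A] (n : ℕ) : Subgroup A :=
  Subgroup.closure (chainSet A n)

section Chain
variable {A : Type*} [Group A] (hA : ¬ Countable A)

lemma chainSet_finite (n : ℕ) : (chainSet A n).Finite := by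
  induction n with
  | zero => exact Set.finite_empty
  | succ n ih => exact ih.insert _

lemma chainF_mono : Monotone (chainF A) := by
  apply monotone_nat_of_le_succ
  intro n
  exact Subgroup.closure_mono (Set.subset_insert _ _)

lemma chainF_countable (n : ℕ) : ((chainF A n : Subgroup A) : Set A).Countable :=
  countable_coe_closure (chainSet_finite n).countable

include hA in
lemma pickOut_chainF (n : ℕ) : pickOut (chainF A n) ∉ chainF A n := by
  apply pickOut_not_mem
  by_contra h
  push_neg at h
  exact hA (Set.countable_univ_iff.mp
    (((Set.eq_univ_of_forall h : (chainF A n : Set A) = _) ▸ chainF_countable n)))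

lemma pickOut_mem_chainF_succ (n : ℕ) : pickOut (chainF A n) ∈ chainF A (n + 1) := by
  apply Subgroup.subset_closure
  exact Set.mem_insert _ _

end Chain


/-- Every uncountable abelian group has a countable quotient which is
not finitely generated. -/
theorem uncountable_abelian_has_countable_infinitely_generated_quotient
    {A : Type*} [CommGroup A] (hA : ¬ Countable A) :
    ∃ N : Subgroup A, Countable (A ⧸ N) ∧ ¬ Group.FG (A ⧸ N) := by
  classical
  set F : Subgroup A := ⨆ n, chainF A n with hF
  have hdir : Directed (· ≤ ·) (chainF A) := (chainF_mono).directed_le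
  have hFcoe : (F : Set A) = ⋃ n, (chainF A n : Set A) := Subgroup.coe_iSup_of_directed hdir
  have hFcnt : (F : Set A).Countable := by
    rw [hFcoe]; exact Set.countable_iUnion fun n => chainF_countable n
  -- Zorn's lemma: a subgroup maximal with respect to trivial intersection with F
  obtain ⟨N, -, hNmax⟩ := zorn_le_nonempty₀ {N : Subgroup A | N ⊓ F = ⊥}
    (fun c hcs hchain y hy => by
      refine ⟨sSup c, ?_, fun z hz => le_sSup hz⟩
      rw [Set.mem_setOf_eq, eq_bot_iff]
      intro x hx
      obtain ⟨hx1, hx2⟩ := hx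
      obtain ⟨M, hMc, hxM⟩ := (Subgroup.mem_sSup_of_directedOn ⟨y, hy⟩
        hchain.directedOn).mp hx1
      have : x ∈ M ⊓ F := ⟨hxM, hx2⟩
      rwa [hcs hMc] at this) ⊥ (by simp)
  have hNF : N ⊓ F = ⊥ := hNmax.prop
  set π : A →* A ⧸ N := QuotientGroup.mk' N with hπ
  -- injectivity of π on F
  have hinj : ∀ x ∈ F, π x = 1 → x = 1 := by
    intro x hxF hx1
    have hxN : x ∈ N := by rwa [hπ, QuotientGroup.mk'_apply, QuotientGroup.eq_one_iff] at hx1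
    have : x ∈ N ⊓ F := ⟨hxN, hxF⟩
    rwa [hNF, Subgroup.mem_bot] at this
  -- essentiality
  have hess : ∀ q : A ⧸ N, q ≠ 1 → ∃ k : ℤ, q ^ k ≠ 1 ∧ q ^ k ∈ F.map π := by
    intro q hq
    obtain ⟨x, rfl⟩ := QuotientGroup.mk'_surjective N q
    have hxN : x ∉ N := by
      intro h
      exact hq (by rwa [QuotientGroup.mk'_apply, QuotientGroup.eq_one_iff])
    have hxmem : x ∈ N ⊔ Subgroup.zpowers x :=
      Subgroup.mem_sup_right (Subgroup.mem_zpowers x)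
    have hne : (N ⊔ Subgroup.zpowers x) ⊓ F ≠ ⊥ := by
      intro h0
      have hle : N ⊔ Subgroup.zpowers x ≤ N := hNmax.2 h0 le_sup_left
      exact hxN (hle hxmem)
    obtain ⟨f, hfmem, hf1⟩ : ∃ f, f ∈ (N ⊔ Subgroup.zpowers x) ⊓ F ∧ f ≠ 1 := by
      by_contra h
      push_neg at h
      exact hne (Subgroup.eq_bot_iff_forall _ |>.mpr h)
    have hπf : π f ∈ Subgroup.zpowers (π x) := by
      have h1 : π f ∈ (N ⊔ Subgroup.zpowers x).map π :=
        Subgroup.mem_map_of_mem π hfmem.1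
      rw [Subgroup.map_sup, MonoidHom.map_zpowers] at h1
      have hbot : N.map π = ⊥ := by
        rw [eq_bot_iff]
        rintro y ⟨a, haN, rfl⟩
        simp only [Subgroup.mem_bot, hπ, QuotientGroup.mk'_apply, QuotientGroup.eq_one_iff]
        exact haN
      rwa [hbot, bot_sup_eq] at h1
    obtain ⟨k, hk⟩ := Subgroup.mem_zpowers_iff.mp hπf
    have hk' : (QuotientGroup.mk' N) x ^ k = π f := hk
    refine ⟨k, ?_, ?_⟩
    · rw [hk']
      intro h
      exact hf1 (hinj f hfmem.2 h)
    · rw [hk']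
      exact Subgroup.mem_map_of_mem π hfmem.2
  have hScnt : ((F.map π : Subgroup (A ⧸ N)) : Set (A ⧸ N)).Countable := by
    rw [Subgroup.coe_map]
    exact hFcnt.image π
  refine ⟨N, countable_of_essential hess hScnt, ?_⟩
  -- not finitely generated
  intro hFG
  haveI : Module.Finite ℤ (Additive (A ⧸ N)) :=
    Module.Finite.iff_addGroup_fg.mpr (GroupFG.iff_add_fg.mp hFG)
  have hfgS : (F.map π).FG := by
    have hns := IsNoetherian.noetherian
      (AddSubgroup.toIntSubmodule (Subgroup.toAddSubgroup (F.map π)))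
    rw [Submodule.fg_iff_addSubgroup_fg, AddSubgroup.toIntSubmodule_toAddSubgroup] at hns
    exact (Subgroup.fg_iff_add_fg _).mpr hns
  obtain ⟨T, hTclos, hTfin⟩ := (Subgroup.fg_iff _).mp hfgS
  have hmapdir : Directed (· ≤ ·) (fun n => (chainF A n).map π) :=
    (Monotone.directed_le fun a b h => Subgroup.map_mono (chainF_mono h))
  have hmapsup : F.map π = ⨆ n, (chainF A n).map π := by
    rw [hF]
    exact (Subgroup.gc_map_comap π).l_iSup
  have hTsub : T ⊆ ⋃ n, (((chainF A n).map π : Subgroup (A ⧸ N)) : Set (A ⧸ N)) := by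
    rw [← Subgroup.coe_iSup_of_directed hmapdir, ← hmapsup, ← hTclos]
    exact Subgroup.subset_closure
  -- a finite set inside a directed union is inside one member
  have key : ∀ s : Finset (A ⧸ N),
      (↑s : Set (A ⧸ N)) ⊆ ⋃ n, (((chainF A n).map π : Subgroup (A ⧸ N)) : Set (A ⧸ N)) →
      ∃ m, (↑s : Set (A ⧸ N)) ⊆ (((chainF A m).map π : Subgroup (A ⧸ N)) : Set (A ⧸ N)) := by
    intro s
    induction s using Finset.induction_on with
    | empty => exact fun _ => ⟨0, by simp⟩
    | @insert a s ha ih =>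
      intro hsub
      rw [Finset.coe_insert, Set.insert_subset_iff] at hsub
      obtain ⟨m₁, hm₁⟩ := ih hsub.2
      obtain ⟨n₁, hn₁⟩ := Set.mem_iUnion.mp hsub.1
      refine ⟨max n₁ m₁, ?_⟩
      rw [Finset.coe_insert, Set.insert_subset_iff]
      exact ⟨Subgroup.map_mono (chainF_mono (le_max_left n₁ m₁)) hn₁,
        hm₁.trans (Subgroup.map_mono (chainF_mono (le_max_right n₁ m₁)))⟩
  obtain ⟨m, hm⟩ := key hTfin.toFinset (by rwa [Set.Finite.coe_toFinset])
  have hle : F.map π ≤ (chainF A m).map π := by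
    rw [← hTclos]
    exact (Subgroup.closure_le _).mpr (by rwa [Set.Finite.coe_toFinset] at hm)
  -- contradiction with the strictly increasing chain
  set x := pickOut (chainF A m) with hx
  have hxF : x ∈ F := le_iSup (chainF A) (m + 1) (pickOut_mem_chainF_succ m)
  have hπx : π x ∈ (chainF A m).map π := hle (Subgroup.mem_map_of_mem π hxF)
  obtain ⟨y, hy, hyx⟩ := hπx
  have hyF : y ∈ F := le_iSup (chainF A) m hy
  have h1 : π (y⁻¹ * x) = 1 := by
    rw [map_mul, map_inv, hyx]
    simp
  have h2 : y⁻¹ * x = 1 := hinj _ (mul_mem (inv_mem hyF) hxF) h1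
  have hxy : x = y := by
    rw [← inv_mul_cancel y] at h2
    exact mul_left_cancel h2
  have hxm : x ∈ chainF A m := by rw [hxy]; exact hy
  exact pickOut_chainF hA m hxm
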